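/- Let C ⊆ C0 with u ∈ C (no restriction on net sizes), and consider the s-t cut (B1,B2) of the Lawler-expansion flow graph with B2 = C ∪ {e⁻ : all pins of e lie in C} ∪ {e⁺ : e has at least one pin in C} ∪ {t} and B1 the complement. Then the weight of this cut equals cut(C0)·d_w(C0∖C) + cut(C)·d_w(C0); in particular it is finite, and for each net e crossing (C, (C0∪{r})∖C) exactly one cut edge, namely (e⁻,e⁺) of capacity d_w(C0)·w(e), crosses from B1 to B2 among the net-expansion edges. -/

import Mathlib

open scoped ENNReal

namespace Stmt9

/-- Nodes of the Lawler-expansion flow graph: the elements of `C0` (via `base`),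
two auxiliary nodes `eminus i`, `eplus i` for each net `i`, a source `s`
(with which the contracted node `r` is identified) and a sink `t`. -/
inductive LNode (α ι : Type*) where
  | base : α → LNode α ι
  | eminus : ι → LNode α ι
  | eplus : ι → LNode α ι
  | s : LNode α ι
  | t : LNode α ι
  deriving DecidableEq

variable {α ι : Type*} [DecidableEq α] [DecidableEq ι]

/-- `cut C` : total weight of the nets containing an element of `C` and an
element of `(C0 ∪ {r}) \ C`. -/
def cut (C0 : Finset α) (r : α) (Nets : Finset ι) (net : ι → Finset α) (w : ι → ℝ)
    (C : Finset α) : ℝ :=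
  ∑ i ∈ Nets.filter
      (fun i => (net i ∩ C).Nonempty ∧ (net i ∩ (insert r C0 \ C)).Nonempty), w i

/-- weighted degree `d_w(v)` : total weight of the nets containing `v`. -/
def dw (Nets : Finset ι) (net : ι → Finset α) (w : ι → ℝ) (v : α) : ℝ :=
  ∑ i ∈ Nets.filter (fun i => v ∈ net i), w i

/-- weighted volume `d_w(C)`. -/
def dwS (Nets : Finset ι) (net : ι → Finset α) (w : ι → ℝ) (C : Finset α) : ℝ :=
  ∑ v ∈ C, dw Nets net w v

/-- Capacities of the Lawler-expansion flow graph. -/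
noncomputable def lawlerCap (C0 : Finset α) (r u : α) (Nets : Finset ι)
    (net : ι → Finset α) (w : ι → ℝ) : LNode α ι → LNode α ι → ℝ≥0∞
  | LNode.eminus i, LNode.eplus j =>
      if i = j ∧ i ∈ Nets then ENNReal.ofReal (dwS Nets net w C0 * w i) else 0
  | LNode.base x, LNode.eminus i =>
      if i ∈ Nets ∧ x ∈ net i ∧ x ∈ C0 then ⊤ else 0
  | LNode.s, LNode.eminus i =>
      if i ∈ Nets ∧ r ∈ net i then ⊤ else 0
  | LNode.eplus i, LNode.base x =>
      if i ∈ Nets ∧ x ∈ net i ∧ x ∈ C0 then ⊤ else 0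
  | LNode.base v, LNode.t =>
      if v ∈ C0 then
        (if v = u then ⊤
         else ENNReal.ofReal (cut C0 r Nets net w C0 * dw Nets net w v))
      else 0
  | _, _ => 0

/-- The node set of the Lawler-expansion flow graph:
`C0 ∪ {s, t} ∪ {e⁻, e⁺ : e ∈ 𝓔}`. -/
def nodeSet (C0 : Finset α) (Nets : Finset ι) : Finset (LNode α ι) :=
  C0.image LNode.base ∪ Nets.image LNode.eminus ∪ Nets.image LNode.eplus ∪
    {LNode.s, LNode.t}

/-- The block `B2` of the cut considered in the theorem:
`B2 = C ∪ {e⁻ : all pins of e lie in C} ∪ {e⁺ : e has a pin in C} ∪ {t}`. -/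
def B2 (C0 : Finset α) (Nets : Finset ι) (net : ι → Finset α)
    (C : Finset α) : Finset (LNode α ι) :=
  C.image LNode.base ∪
    (Nets.filter (fun i => net i ⊆ C)).image LNode.eminus ∪
    (Nets.filter (fun i => (net i ∩ C).Nonempty)).image LNode.eplus ∪
    {LNode.t}

/-- The block `B1` is the complement of `B2` in the node set. -/
def B1 (C0 : Finset α) (Nets : Finset ι) (net : ι → Finset α)
    (C : Finset α) : Finset (LNode α ι) :=
  nodeSet C0 Nets \ B2 C0 Nets net C

/-- For `C ⊆ C0` with `u ∈ C`, the weight of the s-t cut `(B1, B2)` of the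
Lawler-expansion flow graph with `B2 = C ∪ {e⁻ : pins(e) ⊆ C} ∪
{e⁺ : pins(e) ∩ C ≠ ∅} ∪ {t}` equals `cut(C0)·d_w(C0∖C) + cut(C)·d_w(C0)`;
in particular it is finite, and for each net `e` crossing `(C, (C0∪{r})∖C)`
exactly one cut edge, namely `(e⁻, e⁺)` of capacity `d_w(C0)·w(e)`, crosses
from `B1` to `B2` among the net-expansion edges. -/
lemma disj_img {β γ δ : Type*} [DecidableEq δ] (f : β → δ) (g : γ → δ)
    (h : ∀ a b, f a ≠ g b) (s : Finset β) (t : Finset γ) :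
    Disjoint (s.image f) (t.image g) := by
  rw [Finset.disjoint_left]
  rintro x hx hy
  obtain ⟨a, _, rfl⟩ := Finset.mem_image.mp hx
  obtain ⟨b, _, hb⟩ := Finset.mem_image.mp hy
  exact h a b hb.symm

set_option maxHeartbeats 1000000 in
theorem lawler_expansion_cut_weight
    (C0 : Finset α) (u r : α) (hu : u ∈ C0) (hr : r ∉ C0)
    (Nets : Finset ι) (net : ι → Finset α) (w : ι → ℝ)
    (hsub : ∀ i ∈ Nets, net i ⊆ insert r C0)
    (hcard : ∀ i ∈ Nets, 2 ≤ (net i).card)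
    (hw : ∀ i ∈ Nets, 0 < w i)
    (C : Finset α) (hC : C ⊆ C0) (huC : u ∈ C) :
    (∑ x ∈ B1 C0 Nets net C, ∑ y ∈ B2 C0 Nets net C,
        lawlerCap C0 r u Nets net w x y) =
      ENNReal.ofReal (cut C0 r Nets net w C0 * dwS Nets net w (C0 \ C) +
        cut C0 r Nets net w C * dwS Nets net w C0) ∧
    (∑ x ∈ B1 C0 Nets net C, ∑ y ∈ B2 C0 Nets net C,
        lawlerCap C0 r u Nets net w x y) ≠ ⊤ ∧
    (∀ i ∈ Nets, (net i ∩ C).Nonempty → (net i ∩ (insert r C0 \ C)).Nonempty →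
      ((B1 C0 Nets net C ×ˢ B2 C0 Nets net C).filter (fun p =>
          (p.1 = LNode.eminus i ∨ p.1 = LNode.eplus i ∨
           p.2 = LNode.eminus i ∨ p.2 = LNode.eplus i) ∧
          lawlerCap C0 r u Nets net w p.1 p.2 ≠ 0)) =
        {((LNode.eminus i : LNode α ι), (LNode.eplus i : LNode α ι))} ∧
      lawlerCap C0 r u Nets net w (LNode.eminus i) (LNode.eplus i) =
        ENNReal.ofReal (dwS Nets net w C0 * w i)) := by
  classical
  -- nonnegativity facts
  have hw0 : ∀ i ∈ Nets, (0:ℝ) ≤ w i := fun i hi => (hw i hi).le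
  have hdw : ∀ v, (0:ℝ) ≤ dw Nets net w v := fun v =>
    Finset.sum_nonneg fun i hi => hw0 i (Finset.mem_filter.mp hi).1
  have hdwS : ∀ S : Finset α, (0:ℝ) ≤ dwS Nets net w S := fun S =>
    Finset.sum_nonneg fun v _ => hdw v
  have hcut : ∀ S, (0:ℝ) ≤ cut C0 r Nets net w S := fun S =>
    Finset.sum_nonneg fun i hi => hw0 i (Finset.mem_filter.mp hi).1
  -- explicit description of B1
  have hB1 : B1 C0 Nets net C =
      (C0 \ C).image LNode.base ∪
        (Nets.filter (fun i => ¬ net i ⊆ C)).image LNode.eminus ∪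
        (Nets.filter (fun i => ¬ (net i ∩ C).Nonempty)).image LNode.eplus ∪
        {LNode.s} := by
    ext x
    cases x <;> simp [B1, B2, nodeSet] <;> tauto
  -- injectivity of constructors on any set
  have injb : ∀ (S : Finset α), ∀ x ∈ S, ∀ y ∈ S,
      (LNode.base x : LNode α ι) = LNode.base y → x = y := by
    intro S x _ y _ h; injection h
  have injm : ∀ (S : Finset ι), ∀ x ∈ S, ∀ y ∈ S,
      (LNode.eminus x : LNode α ι) = LNode.eminus y → x = y := by
    intro S x _ y _ h; injection h
  have injp : ∀ (S : Finset ι), ∀ x ∈ S, ∀ y ∈ S,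
      (LNode.eplus x : LNode α ι) = LNode.eplus y → x = y := by
    intro S x _ y _ h; injection h
  -- disjointness facts
  have db_m : ∀ (S : Finset α) (T : Finset ι),
      Disjoint (S.image LNode.base : Finset (LNode α ι)) (T.image LNode.eminus) :=
    fun S T => disj_img _ _ (fun a b h => by cases h) _ _
  have db_p : ∀ (S : Finset α) (T : Finset ι),
      Disjoint (S.image LNode.base : Finset (LNode α ι)) (T.image LNode.eplus) :=
    fun S T => disj_img _ _ (fun a b h => by cases h) _ _
  have dm_p : ∀ (T T' : Finset ι),
      Disjoint (T.image LNode.eminus : Finset (LNode α ι)) (T'.image LNode.eplus) :=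
    fun T T' => disj_img _ _ (fun a b h => by cases h) _ _
  have d_up : ∀ (S : Finset α) (T T' : Finset ι),
      Disjoint ((S.image LNode.base ∪ T.image LNode.eminus : Finset (LNode α ι)))
        (T'.image LNode.eplus) :=
    fun S T T' => Finset.disjoint_union_left.mpr ⟨db_p _ _, dm_p _ _⟩
  have d_t : ∀ (S : Finset α) (T T' : Finset ι),
      Disjoint ((S.image LNode.base ∪ T.image LNode.eminus ∪ T'.image LNode.eplus :
        Finset (LNode α ι))) {LNode.t} :=
    fun S T T' => Finset.disjoint_singleton_right.mpr (by simp)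
  have d_s : ∀ (S : Finset α) (T T' : Finset ι),
      Disjoint ((S.image LNode.base ∪ T.image LNode.eminus ∪ T'.image LNode.eplus :
        Finset (LNode α ι))) {LNode.s} :=
    fun S T T' => Finset.disjoint_singleton_right.mpr (by simp)
  -- inner sums
  have hFbase : ∀ v ∈ C0 \ C,
      (∑ y ∈ B2 C0 Nets net C, lawlerCap C0 r u Nets net w (LNode.base v) y) =
        ENNReal.ofReal (cut C0 r Nets net w C0 * dw Nets net w v) := by
    intro v hv
    obtain ⟨hvC0, hvC⟩ := Finset.mem_sdiff.mp hv
    have hvu : v ≠ u := fun h => hvC (h ▸ huC)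
    rw [B2, Finset.sum_union (d_t _ _ _), Finset.sum_union (d_up _ _ _),
      Finset.sum_union (db_m _ _),
      Finset.sum_image (injb _), Finset.sum_image (injm _),
      Finset.sum_image (injp _), Finset.sum_singleton]
    have h1 : (∑ c ∈ C, lawlerCap C0 r u Nets net w (LNode.base v) (LNode.base c)) = 0 :=
      Finset.sum_eq_zero fun c _ => by simp [lawlerCap]
    have h2 : (∑ j ∈ Nets.filter (fun i => net i ⊆ C),
        lawlerCap C0 r u Nets net w (LNode.base v) (LNode.eminus j)) = 0 := by
      refine Finset.sum_eq_zero fun j hj => ?_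
      obtain ⟨hjN, hjC⟩ := Finset.mem_filter.mp hj
      simp only [lawlerCap]
      exact if_neg (fun h : j ∈ Nets ∧ v ∈ net j ∧ v ∈ C0 => hvC (hjC h.2.1))
    have h3 : (∑ j ∈ Nets.filter (fun i => (net i ∩ C).Nonempty),
        lawlerCap C0 r u Nets net w (LNode.base v) (LNode.eplus j)) = 0 :=
      Finset.sum_eq_zero fun j _ => by simp [lawlerCap]
    have h4 : lawlerCap C0 r u Nets net w (LNode.base v) LNode.t =
        ENNReal.ofReal (cut C0 r Nets net w C0 * dw Nets net w v) := by
      simp [lawlerCap, hvC0, hvu]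
    rw [h1, h2, h3, h4]; simp
  have hFeminus : ∀ i ∈ Nets.filter (fun i => ¬ net i ⊆ C),
      (∑ y ∈ B2 C0 Nets net C, lawlerCap C0 r u Nets net w (LNode.eminus i) y) =
        (if (net i ∩ C).Nonempty then ENNReal.ofReal (dwS Nets net w C0 * w i) else 0) := by
    intro i hi
    obtain ⟨hiN, hins⟩ := Finset.mem_filter.mp hi
    rw [B2, Finset.sum_union (d_t _ _ _), Finset.sum_union (d_up _ _ _),
      Finset.sum_union (db_m _ _),
      Finset.sum_image (injb _), Finset.sum_image (injm _),
      Finset.sum_image (injp _), Finset.sum_singleton]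
    have h1 : (∑ c ∈ C, lawlerCap C0 r u Nets net w (LNode.eminus i) (LNode.base c)) = 0 :=
      Finset.sum_eq_zero fun c _ => by simp [lawlerCap]
    have h2 : (∑ j ∈ Nets.filter (fun i => net i ⊆ C),
        lawlerCap C0 r u Nets net w (LNode.eminus i) (LNode.eminus j)) = 0 :=
      Finset.sum_eq_zero fun j _ => by simp [lawlerCap]
    have h4 : lawlerCap C0 r u Nets net w (LNode.eminus i) LNode.t = 0 := by
      simp [lawlerCap]
    have h3 : (∑ j ∈ Nets.filter (fun i => (net i ∩ C).Nonempty),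
        lawlerCap C0 r u Nets net w (LNode.eminus i) (LNode.eplus j)) =
        (if (net i ∩ C).Nonempty then ENNReal.ofReal (dwS Nets net w C0 * w i) else 0) := by
      by_cases hne : (net i ∩ C).Nonempty
      · rw [if_pos hne,
          Finset.sum_eq_single_of_mem i (Finset.mem_filter.mpr ⟨hiN, hne⟩)
            (fun j hj hji => by
              simp only [lawlerCap]
              exact if_neg (fun h : i = j ∧ i ∈ Nets => hji h.1.symm))]
        simp [lawlerCap, hiN]
      · rw [if_neg hne]
        refine Finset.sum_eq_zero fun j hj => ?_
        obtain ⟨hjN, hjne⟩ := Finset.mem_filter.mp hj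
        simp only [lawlerCap]
        exact if_neg (fun h : i = j ∧ i ∈ Nets => hne (h.1 ▸ hjne))
    rw [h1, h2, h3, h4]; simp
  have hFeplus : ∀ i ∈ Nets.filter (fun i => ¬ (net i ∩ C).Nonempty),
      (∑ y ∈ B2 C0 Nets net C, lawlerCap C0 r u Nets net w (LNode.eplus i) y) = 0 := by
    intro i hi
    obtain ⟨hiN, hine⟩ := Finset.mem_filter.mp hi
    refine Finset.sum_eq_zero fun y hy => ?_
    simp only [B2, Finset.mem_union, Finset.mem_image, Finset.mem_filter,
      Finset.mem_singleton] at hy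
    rcases hy with ((⟨c, hc, rfl⟩ | ⟨j, _, rfl⟩) | ⟨j, _, rfl⟩) | rfl
    · simp only [lawlerCap]
      exact if_neg (fun h => hine ⟨c, Finset.mem_inter.mpr ⟨h.2.1, hc⟩⟩)
    · simp [lawlerCap]
    · simp [lawlerCap]
    · simp [lawlerCap]
  have hFs : (∑ y ∈ B2 C0 Nets net C, lawlerCap C0 r u Nets net w LNode.s y) = 0 := by
    refine Finset.sum_eq_zero fun y hy => ?_
    simp only [B2, Finset.mem_union, Finset.mem_image, Finset.mem_filter,
      Finset.mem_singleton] at hy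
    rcases hy with ((⟨c, hc, rfl⟩ | ⟨j, hj, rfl⟩) | ⟨j, _, rfl⟩) | rfl
    · simp [lawlerCap]
    · simp only [lawlerCap]
      exact if_neg (fun h => hr (hC (hj.2 h.2)))
    · simp [lawlerCap]
    · simp [lawlerCap]
  -- the crossing filter
  have hcrossfilt : (Nets.filter (fun i => ¬ net i ⊆ C)).filter
        (fun i => (net i ∩ C).Nonempty) =
      Nets.filter (fun i => (net i ∩ C).Nonempty ∧
        (net i ∩ (insert r C0 \ C)).Nonempty) := by
    rw [Finset.filter_filter]
    refine Finset.filter_congr fun i hi => ?_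
    constructor
    · rintro ⟨hns, hne⟩
      refine ⟨hne, ?_⟩
      obtain ⟨x, hx, hxC⟩ := Finset.not_subset.mp hns
      exact ⟨x, Finset.mem_inter.mpr ⟨hx, Finset.mem_sdiff.mpr ⟨hsub i hi hx, hxC⟩⟩⟩
    · rintro ⟨hne, x, hx⟩
      obtain ⟨hx1, hx2⟩ := Finset.mem_inter.mp hx
      exact ⟨Finset.not_subset.mpr ⟨x, hx1, (Finset.mem_sdiff.mp hx2).2⟩, hne⟩
  -- main sum computation
  have hsum : (∑ x ∈ B1 C0 Nets net C, ∑ y ∈ B2 C0 Nets net C,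
        lawlerCap C0 r u Nets net w x y) =
      ENNReal.ofReal (cut C0 r Nets net w C0 * dwS Nets net w (C0 \ C) +
        cut C0 r Nets net w C * dwS Nets net w C0) := by
    rw [hB1, Finset.sum_union (d_s _ _ _), Finset.sum_union (d_up _ _ _),
      Finset.sum_union (db_m _ _),
      Finset.sum_image (injb _), Finset.sum_image (injm _),
      Finset.sum_image (injp _), Finset.sum_singleton]
    rw [Finset.sum_congr rfl hFbase, Finset.sum_congr rfl hFeminus,
      Finset.sum_congr rfl hFeplus, hFs]
    rw [Finset.sum_const_zero, ← Finset.sum_filter, hcrossfilt]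
    have e1 : (∑ v ∈ C0 \ C, ENNReal.ofReal (cut C0 r Nets net w C0 * dw Nets net w v)) =
        ENNReal.ofReal (cut C0 r Nets net w C0 * dwS Nets net w (C0 \ C)) := by
      rw [dwS, Finset.mul_sum, ENNReal.ofReal_sum_of_nonneg]
      intro v _
      exact mul_nonneg (hcut _) (hdw v)
    have e2 : (∑ i ∈ Nets.filter (fun i => (net i ∩ C).Nonempty ∧
          (net i ∩ (insert r C0 \ C)).Nonempty),
          ENNReal.ofReal (dwS Nets net w C0 * w i)) =
        ENNReal.ofReal (cut C0 r Nets net w C * dwS Nets net w C0) := by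
      rw [cut, Finset.sum_mul, ← ENNReal.ofReal_sum_of_nonneg]
      · exact congrArg ENNReal.ofReal (Finset.sum_congr rfl fun i _ => mul_comm _ _)
      · intro i hi
        exact mul_nonneg (hdwS _) (hw0 i (Finset.mem_filter.mp hi).1)
    rw [e1, e2, add_zero, add_zero, ← ENNReal.ofReal_add
      (mul_nonneg (hcut _) (hdwS _)) (mul_nonneg (hcut _) (hdwS _))]
  refine ⟨hsum, by rw [hsum]; exact ENNReal.ofReal_ne_top, ?_⟩
  -- third part
  intro i hi h1 h2
  have hcapval : lawlerCap C0 r u Nets net w (LNode.eminus i) (LNode.eplus i) =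
      ENNReal.ofReal (dwS Nets net w C0 * w i) := by simp [lawlerCap, hi]
  have hnotsub : ¬ net i ⊆ C := by
    obtain ⟨x, hx⟩ := h2
    obtain ⟨hx1, hx2⟩ := Finset.mem_inter.mp hx
    exact Finset.not_subset.mpr ⟨x, hx1, (Finset.mem_sdiff.mp hx2).2⟩
  -- positivity of dwS(C0) * w i
  obtain ⟨v0, hv0⟩ := h1
  obtain ⟨hv0net, hv0C⟩ := Finset.mem_inter.mp hv0
  have hv0C0 : v0 ∈ C0 := hC hv0C
  have hdwv : w i ≤ dw Nets net w v0 :=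
    Finset.single_le_sum (f := w) (fun j hj => hw0 j (Finset.mem_filter.mp hj).1)
      (Finset.mem_filter.mpr ⟨hi, hv0net⟩)
  have hdwSpos : 0 < dwS Nets net w C0 :=
    lt_of_lt_of_le (lt_of_lt_of_le (hw i hi) hdwv)
      (Finset.single_le_sum (fun v' _ => hdw v') hv0C0)
  have hcapne : lawlerCap C0 r u Nets net w (LNode.eminus i) (LNode.eplus i) ≠ 0 := by
    rw [hcapval]
    exact (ENNReal.ofReal_pos.mpr (mul_pos hdwSpos (hw i hi))).ne'
  have hmemB1 : (LNode.eminus i : LNode α ι) ∈ B1 C0 Nets net C := by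
    rw [hB1]
    simp only [Finset.mem_union, Finset.mem_image, Finset.mem_filter, Finset.mem_singleton]
    exact Or.inl (Or.inl (Or.inr ⟨i, ⟨hi, hnotsub⟩, rfl⟩))
  have hmemB2 : (LNode.eplus i : LNode α ι) ∈ B2 C0 Nets net C := by
    simp only [B2, Finset.mem_union, Finset.mem_image, Finset.mem_filter, Finset.mem_singleton]
    exact Or.inl (Or.inr ⟨i, ⟨hi, ⟨v0, hv0⟩⟩, rfl⟩)
  refine ⟨?_, hcapval⟩
  refine Finset.ext fun p => ?_
  obtain ⟨x, y⟩ := p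
  simp only [Finset.mem_filter, Finset.mem_product, Finset.mem_singleton, Prod.mk.injEq]
  constructor
  · rintro ⟨⟨hp1, hp2⟩, hdisj, hcap⟩
    rcases hdisj with rfl | rfl | rfl | rfl
    · -- x = eminus i
      cases y <;> simp [lawlerCap] at hcap
      obtain ⟨⟨rfl, -⟩, -⟩ := hcap
      exact ⟨rfl, rfl⟩
    · -- x = eplus i : contradiction with B1 membership
      rw [hB1] at hp1
      simp only [Finset.mem_union, Finset.mem_image, Finset.mem_filter,
        Finset.mem_singleton] at hp1
      rcases hp1 with ((⟨a, _, ha⟩ | ⟨j, _, hj⟩) | ⟨j, hj, hje⟩) | hx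
      · exact absurd ha (by simp)
      · exact absurd hj (by simp)
      · obtain rfl : j = i := by injection hje
        exact absurd ⟨v0, hv0⟩ hj.2
      · exact absurd hx (by simp)
    · -- y = eminus i : contradiction with B2 membership
      simp only [B2, Finset.mem_union, Finset.mem_image, Finset.mem_filter,
        Finset.mem_singleton] at hp2
      rcases hp2 with ((⟨a, _, ha⟩ | ⟨j, hj, hje⟩) | ⟨j, _, hj⟩) | hy
      · exact absurd ha (by simp)
      · obtain rfl : j = i := by injection hje
        exact absurd hj.2 hnotsub
      · exact absurd hj (by simp)
      · exact absurd hy (by simp)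
    · -- y = eplus i
      cases x <;> simp [lawlerCap] at hcap
      obtain ⟨⟨rfl, -⟩, -⟩ := hcap
      exact ⟨rfl, rfl⟩
  · rintro ⟨rfl, rfl⟩
    exact ⟨⟨hmemB1, hmemB2⟩, Or.inl rfl, hcapne⟩
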